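/- Let k be an algebraically closed field of characteristic zero, S a finite group, and B a Galois S-algebra over k that is simple as a ring. Then the group of S-equivariant k-algebra automorphisms of B (automorphisms f with f(s·b) = s·f(b) for all s ∈ S, b ∈ B) is isomorphic to the character group Ŝ = Hom(S, kˣ) of group homomorphisms from S to the multiplicative group of k. -/

import Mathlib

/-- The structure map `θ : ⊕_{s ∈ S} B → End_k(B)`, `θ(a·s)(b) = a * s(b)`, of
an `S`-algebra `B` (with `S` acting by `k`-algebra automorphisms via `act`). -/
noncomputable def galoisMap (k : Type*) {B S : Type*} [Field k] [Ring B]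
    [Algebra k B] [Fintype S] [Group S] (act : S →* (B ≃ₐ[k] B)) :
    (S → B) → (B →ₗ[k] B) :=
  fun f => ∑ s : S, (LinearMap.mulLeft k (f s)) ∘ₗ (act s).toLinearMap

/-- The group of `S`-equivariant `k`-algebra automorphisms of `B`. -/
def equivariantAut (k : Type*) {B S : Type*} [Field k] [Ring B] [Algebra k B]
    [Group S] (act : S →* (B ≃ₐ[k] B)) : Subgroup (B ≃ₐ[k] B) where
  carrier := {f | ∀ (s : S) (b : B), f (act s b) = act s (f b)}
  one_mem' := fun _ _ => rfl
  mul_mem' := by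
    intro f g hf hg s b
    simp only [AlgEquiv.mul_apply]
    rw [hg, hf]
  inv_mem' := by
    intro f hf s b
    apply f.injective
    show f (f.symm ((act s) b)) = f ((act s) (f.symm b))
    rw [AlgEquiv.apply_symm_apply, hf, AlgEquiv.apply_symm_apply]

/-- In a finite-dimensional algebra, a right inverse makes a unit. -/
lemma isUnit_of_mul_eq_one' (k : Type*) {B : Type*} [Field k] [Ring B] [Algebra k B]
    [FiniteDimensional k B] (u v : B) (h : u * v = 1) : IsUnit u := by
  have hinj : Function.Injective (LinearMap.mulRight k u) := by
    intro x y hxy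
    simp only [LinearMap.mulRight_apply] at hxy
    calc x = x * (u * v) := by rw [h, mul_one]
    _ = (x * u) * v := by rw [mul_assoc]
    _ = (y * u) * v := by rw [hxy]
    _ = y * (u * v) := by rw [mul_assoc]
    _ = y := by rw [h, mul_one]
  have hsurj := (LinearMap.injective_iff_surjective).mp hinj
  obtain ⟨w, hw⟩ := hsurj 1
  simp only [LinearMap.mulRight_apply] at hw
  have hwv : w = v := by
    calc w = w * (u * v) := by rw [h, mul_one]
    _ = (w * u) * v := by rw [mul_assoc]
    _ = v := by rw [hw, one_mul]
  exact ⟨⟨u, v, h, by rw [← hwv]; exact hw⟩, rfl⟩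

/-- In a finite-dimensional algebra, a left inverse makes a unit. -/
lemma isUnit_of_mul_eq_one'' (k : Type*) {B : Type*} [Field k] [Ring B] [Algebra k B]
    [FiniteDimensional k B] (u v : B) (h : v * u = 1) : IsUnit u := by
  have hinj : Function.Injective (LinearMap.mulLeft k u) := by
    intro x y hxy
    simp only [LinearMap.mulLeft_apply] at hxy
    calc x = (v * u) * x := by rw [h, one_mul]
    _ = v * (u * x) := by rw [mul_assoc]
    _ = v * (u * y) := by rw [hxy]
    _ = (v * u) * y := by rw [mul_assoc]
    _ = y := by rw [h, one_mul]
  have hsurj := (LinearMap.injective_iff_surjective).mp hinj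
  obtain ⟨w, hw⟩ := hsurj 1
  simp only [LinearMap.mulLeft_apply] at hw
  have hvw : v = w := by
    calc v = v * (u * w) := by rw [hw, mul_one]
    _ = (v * u) * w := by rw [mul_assoc]
    _ = w := by rw [h, one_mul]
  exact ⟨⟨u, w, hw, by rw [← hvw]; exact h⟩, rfl⟩

/-- A nonzero central element of a simple algebra is a unit. -/
lemma central_isUnit (k : Type*) {B : Type*} [Field k] [Ring B] [Algebra k B]
    [FiniteDimensional k B] [IsSimpleRing B] {z : B} (hz0 : z ≠ 0)
    (hz : ∀ x : B, x * z = z * x) : IsUnit z := by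
  let I : TwoSidedIdeal B := TwoSidedIdeal.mk' {x | ∃ y, x = z * y}
    ⟨0, (mul_zero z).symm⟩
    (fun {x y} ⟨a, ha⟩ ⟨b, hb⟩ => ⟨a + b, by rw [ha, hb, mul_add]⟩)
    (fun {x} ⟨a, ha⟩ => ⟨-a, by rw [ha, mul_neg]⟩)
    (fun {x y} ⟨a, ha⟩ => ⟨x * a, by rw [ha, ← mul_assoc, hz x, mul_assoc]⟩)
    (fun {x y} ⟨a, ha⟩ => ⟨a * y, by rw [ha, mul_assoc]⟩)
  have hmem : ∀ x, x ∈ I ↔ ∃ y, x = z * y := fun x =>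
    TwoSidedIdeal.mem_mk' _ _ _ _ _ _ x
  rcases IsSimpleRing.simple.eq_bot_or_eq_top I with h | h
  · exfalso
    have : z ∈ I := (hmem z).mpr ⟨1, (mul_one z).symm⟩
    rw [h, TwoSidedIdeal.mem_bot] at this
    exact hz0 this
  · have : (1 : B) ∈ I := by rw [h]; exact TwoSidedIdeal.mem_top B
    obtain ⟨y, hy⟩ := (hmem 1).mp this
    exact isUnit_of_mul_eq_one' k z y hy.symm

section Aux

variable {k B S : Type*} [Field k] [IsAlgClosed k]
    [Ring B] [Algebra k B] [FiniteDimensional k B] [Group S] [Fintype S]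
    (act : S →* (B ≃ₐ[k] B))

lemma galoisMap_apply (f : S → B) (b : B) :
    galoisMap k act f b = ∑ s : S, f s * act s b := by
  simp [galoisMap, LinearMap.sum_apply, LinearMap.mulLeft_apply]

lemma act_act (s t : S) (m : B) : act s (act t m) = act (s * t) m := by
  rw [map_mul]; rfl

lemma act_cancel (s : S) (m : B) : act s (act s⁻¹ m) = m := by
  rw [act_act, mul_inv_cancel, map_one]; rfl

lemma act_cancel' (s : S) (m : B) : act s⁻¹ (act s m) = m := by
  rw [act_act, inv_mul_cancel, map_one]; rfl

/-- The structure map as a linear map. -/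
noncomputable def galoisLin : (S → B) →ₗ[k] (B →ₗ[k] B) where
  toFun := galoisMap k act
  map_add' f g := by
    apply LinearMap.ext; intro b
    simp only [galoisMap_apply, LinearMap.add_apply, Pi.add_apply, add_mul,
      Finset.sum_add_distrib]
  map_smul' c f := by
    apply LinearMap.ext; intro b
    simp only [galoisMap_apply, RingHom.id_apply, LinearMap.smul_apply, Pi.smul_apply,
      smul_mul_assoc, Finset.smul_sum]

lemma galoisMap_zero : galoisMap k act 0 = 0 := by
  apply LinearMap.ext; intro b
  simp [galoisMap_apply]

lemma galoisMap_eq_zero (hG : Function.Bijective (galoisMap k act)) {g : S → B}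
    (h : ∀ b, ∑ s : S, g s * act s b = 0) : g = 0 := by
  apply hG.injective
  rw [galoisMap_zero]
  apply LinearMap.ext; intro b
  rw [galoisMap_apply]
  exact h b

lemma galoisMap_surj (hG : Function.Bijective (galoisMap k act)) (T : B →ₗ[k] B) :
    ∃ g : S → B, ∀ b, ∑ s : S, g s * act s b = T b := by
  obtain ⟨g, hg⟩ := hG.surjective T
  exact ⟨g, fun b => by rw [← galoisMap_apply act g b, hg]⟩

lemma exists_dual {v : B} (hv : v ≠ 0) : ∃ φ : Module.Dual k B, φ v ≠ 0 := by
  by_contra h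
  push_neg at h
  exact hv ((Module.forall_dual_apply_eq_zero_iff k v).mp h)

lemma exists_endo_map (u : B) (hu : u ≠ 0) (y : B) : ∃ T : B →ₗ[k] B, T u = y := by
  obtain ⟨φ, hφ⟩ := exists_dual (k := k) hu
  refine ⟨(φ u)⁻¹ • (φ.smulRight y), ?_⟩
  simp only [LinearMap.smul_apply, LinearMap.smulRight_apply]
  rw [smul_smul, inv_mul_cancel₀ hφ, one_smul]

/-- Elements fixed by all of `S` are scalars (uses surjectivity of `θ`). -/
lemma fixed_is_scalar [Nontrivial B] (hG : Function.Bijective (galoisMap k act)) {c : B}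
    (hc : ∀ s : S, act s c = c) : ∃ a : k, c = algebraMap k B a := by
  have key : ∀ T : B →ₗ[k] B, ∀ m, T (m * c) = T m * c := by
    intro T m
    obtain ⟨g, hg⟩ := galoisMap_surj act hG T
    rw [← hg, ← hg]
    rw [Finset.sum_mul]
    apply Finset.sum_congr rfl
    intro s _
    rw [map_mul, hc s, mul_assoc]
  obtain ⟨φ, hφ⟩ := exists_dual (k := k) (one_ne_zero : (1 : B) ≠ 0)
  have h1 := key (φ.smulRight (1 : B)) 1
  rw [one_mul] at h1
  simp only [LinearMap.smulRight_apply] at h1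
  rw [smul_mul_assoc, one_mul] at h1
  refine ⟨(φ 1)⁻¹ * φ c, ?_⟩
  rw [Algebra.algebraMap_eq_smul_one, mul_smul]
  rw [h1, smul_smul, inv_mul_cancel₀ hφ, one_smul]

lemma prod_factor_zero [IsSimpleRing B] {c : B} (hc : ∀ x : B, x * c = c * x) :
    ∀ (l : List k), (l.map (fun a => c - algebraMap k B a)).prod = 0 →
      ∃ a ∈ l, c = algebraMap k B a := by
  intro l
  induction l with
  | nil => intro h; simp at h
  | cons a m ih =>
    intro h
    rw [List.map_cons, List.prod_cons] at h
    by_cases hza : c - algebraMap k B a = 0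
    · exact ⟨a, List.mem_cons_self, by rw [← sub_eq_zero]; exact hza⟩
    · have hcen : ∀ x : B, x * (c - algebraMap k B a) = (c - algebraMap k B a) * x := by
        intro x
        rw [mul_sub, sub_mul, hc x, Algebra.commutes]
      obtain ⟨zu, hzu⟩ := central_isUnit k hza hcen
      have hrest : (m.map (fun a => c - algebraMap k B a)).prod = 0 := by
        have := congrArg (fun x => (↑zu⁻¹ : B) * x) h
        simp only [mul_zero] at this
        rw [← mul_assoc, ← hzu, Units.inv_mul, one_mul] at this
        exact this
      obtain ⟨a', ha', hc'⟩ := ih hrest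
      exact ⟨a', List.mem_cons_of_mem a ha', hc'⟩

/-- A central element of a finite-dimensional simple algebra over an
algebraically closed field is a scalar. -/
lemma central_is_scalar [IsSimpleRing B] {c : B} (hc : ∀ x : B, x * c = c * x) :
    ∃ a : k, c = algebraMap k B a := by
  have hint : IsIntegral k c := IsIntegral.of_finite k c
  have hmonic := minpoly.monic hint
  have hsplits : (minpoly k c).Splits := IsAlgClosed.splits _
  have hfact := hsplits.eq_prod_roots_of_monic hmonic
  set l : List k := (minpoly k c).roots.toList with hl
  have hcoe : (↑l : Multiset k) = (minpoly k c).roots := Multiset.coe_toList _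
  have hfact' : minpoly k c = (l.map (fun a => Polynomial.X - Polynomial.C a)).prod := by
    rw [hfact, ← hcoe, Multiset.map_coe, Multiset.prod_coe]
  have haev : (Polynomial.aeval c) (minpoly k c) = 0 := minpoly.aeval k c
  have key : ∀ t : List k,
      (Polynomial.aeval c) ((t.map (fun a => Polynomial.X - Polynomial.C a)).prod)
        = (t.map (fun a => c - algebraMap k B a)).prod := by
    intro t
    induction t with
    | nil => simp
    | cons a r ih =>
      rw [List.map_cons, List.prod_cons, List.map_cons, List.prod_cons, map_mul, ih]
      congr 1
      simp [Polynomial.aeval_X, Polynomial.aeval_C]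
  rw [hfact', key l] at haev
  obtain ⟨a, _, ha⟩ := prod_factor_zero hc l haev
  exact ⟨a, ha⟩

/-- Two intertwiners for the same pair `(f, t)` differ by a scalar. -/
lemma intertwiner_scale [IsSimpleRing B] (f : B ≃ₐ[k] B) (t : S) (u : Bˣ)
    (hu : ∀ x, f x * (u : B) = (u : B) * act t x) {u' : B}
    (hu' : ∀ x, f x * u' = u' * act t x) : ∃ a : k, u' = a • (u : B) := by
  have hcen : ∀ x : B, x * ((↑u⁻¹ : B) * u') = ((↑u⁻¹ : B) * u') * x := by
    intro x
    have hx : act t (act t⁻¹ x) = x := act_cancel act t x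
    have h1 : x * (↑u⁻¹ : B) = (↑u⁻¹ : B) * f (act t⁻¹ x) := by
      calc x * (↑u⁻¹ : B) = (↑u⁻¹ : B) * ((u : B) * x) * (↑u⁻¹ : B) := by
            rw [← mul_assoc, Units.inv_mul, one_mul]
      _ = (↑u⁻¹ : B) * (f (act t⁻¹ x) * (u : B)) * (↑u⁻¹ : B) := by
            rw [hu (act t⁻¹ x), hx]
      _ = (↑u⁻¹ : B) * f (act t⁻¹ x) := by
            rw [mul_assoc, mul_assoc, Units.mul_inv, mul_one]
    calc x * ((↑u⁻¹ : B) * u') = (x * (↑u⁻¹ : B)) * u' := by rw [mul_assoc]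
    _ = ((↑u⁻¹ : B) * f (act t⁻¹ x)) * u' := by rw [h1]
    _ = (↑u⁻¹ : B) * (f (act t⁻¹ x) * u') := by rw [mul_assoc]
    _ = (↑u⁻¹ : B) * (u' * act t (act t⁻¹ x)) := by rw [hu' (act t⁻¹ x)]
    _ = ((↑u⁻¹ : B) * u') * x := by rw [hx, mul_assoc]
  obtain ⟨a, ha⟩ := central_is_scalar (k := k) hcen
  refine ⟨a, ?_⟩
  calc u' = (u : B) * ((↑u⁻¹ : B) * u') := by rw [← mul_assoc, Units.mul_inv, one_mul]
  _ = (u : B) * (a • (1 : B)) := by rw [ha, Algebra.algebraMap_eq_smul_one]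
  _ = a • (u : B) := by rw [mul_smul_comm, mul_one]

/-- A nonzero intertwiner is a unit. -/
lemma intertwiner_isUnit [IsSimpleRing B] (f : B ≃ₐ[k] B) (t : S) {u : B}
    (hu0 : u ≠ 0) (hu : ∀ x, f x * u = u * act t x) : IsUnit u := by
  let I : TwoSidedIdeal B := TwoSidedIdeal.mk' {x | ∃ y, x = u * y}
    ⟨0, (mul_zero u).symm⟩
    (fun {x y} ⟨a, ha⟩ ⟨b, hb⟩ => ⟨a + b, by rw [ha, hb, mul_add]⟩)
    (fun {x} ⟨a, ha⟩ => ⟨-a, by rw [ha, mul_neg]⟩)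
    (fun {x y} ⟨a, ha⟩ => ⟨act t (f.symm x) * a, by
      rw [ha, ← mul_assoc]
      have : x * u = u * act t (f.symm x) := by
        have := hu (f.symm x)
        rw [AlgEquiv.apply_symm_apply] at this
        exact this
      rw [this, mul_assoc]⟩)
    (fun {x y} ⟨a, ha⟩ => ⟨a * y, by rw [ha, mul_assoc]⟩)
  have hmem : ∀ x, x ∈ I ↔ ∃ y, x = u * y := fun x =>
    TwoSidedIdeal.mem_mk' _ _ _ _ _ _ x
  rcases IsSimpleRing.simple.eq_bot_or_eq_top I with h | h
  · exfalso
    have : u ∈ I := (hmem u).mpr ⟨1, (mul_one u).symm⟩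
    rw [h, TwoSidedIdeal.mem_bot] at this
    exact hu0 this
  · have : (1 : B) ∈ I := by rw [h]; exact TwoSidedIdeal.mem_top B
    obtain ⟨y, hy⟩ := (hmem 1).mp this
    exact isUnit_of_mul_eq_one' k u y hy.symm

lemma dim_eq_card (hG : Function.Bijective (galoisMap k act)) [Nontrivial B] :
    Module.finrank k B = Fintype.card S := by
  have hbij : Function.Bijective (galoisLin (k := k) act) := hG
  have he := LinearEquiv.finrank_eq (LinearEquiv.ofBijective (galoisLin (k := k) act) hbij)
  rw [Module.finrank_pi_fintype, Module.finrank_linearMap] at he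
  simp only [Finset.sum_const, Finset.card_univ, smul_eq_mul] at he
  have hd : 0 < Module.finrank k B := Module.finrank_pos
  exact (Nat.eq_of_mul_eq_mul_right hd he).symm

/-- Key lemma: every `k`-algebra automorphism of a Galois `S`-algebra that is
simple is inner. -/
lemma exists_conj_unit (hG : Function.Bijective (galoisMap k act)) [IsSimpleRing B]
    (f : B ≃ₐ[k] B) : ∃ u : Bˣ, ∀ x, f x * (u : B) = (u : B) * x := by
  classical
  -- the intertwiner spaces
  let U : S → Submodule k B := fun t =>
    { carrier := {u | ∀ x, f x * u = u * act t x}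
      add_mem' := fun {a b} ha hb x => by rw [mul_add, add_mul, ha x, hb x]
      zero_mem' := fun x => by rw [mul_zero, zero_mul]
      smul_mem' := fun c a ha x => by
        rw [mul_smul_comm, smul_mul_assoc, ha x] }
  -- the linear injection B → Π t, U t
  have hbij : Function.Bijective (galoisLin (k := k) act) := hG
  let E := LinearEquiv.ofBijective (galoisLin (k := k) act) hbij
  let T : B → (B →ₗ[k] B) := fun u => (LinearMap.mulRight k u) ∘ₗ f.toLinearMap
  have hT : ∀ u m, T u m = f m * u := fun u m => rfl
  let g : B → (S → B) := fun u => E.symm (T u)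
  have hg : ∀ u b, ∑ s : S, g u s * act s b = f b * u := by
    intro u b
    have : galoisMap k act (g u) = T u := E.apply_symm_apply (T u)
    rw [← hT u b, ← this, galoisMap_apply]
  have hgmem : ∀ u t, g u t ∈ U t := by
    intro u t x
    have hzero : (fun r : S => f x * g u r - g u r * act r x) = 0 := by
      apply galoisMap_eq_zero act hG
      intro b
      have h1 : ∑ s : S, (f x * g u s - g u s * act s x) * act s b
          = f x * (∑ s : S, g u s * act s b) - ∑ s : S, g u s * act s (x * b) := by
        rw [Finset.mul_sum, ← Finset.sum_sub_distrib]
        apply Finset.sum_congr rfl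
        intro s _
        rw [sub_mul, mul_assoc, map_mul, mul_assoc]
      rw [h1, hg u b, hg u (x * b), map_mul, mul_assoc, sub_self]
    have := congrFun hzero t
    simp only [Pi.zero_apply, sub_eq_zero] at this
    exact this
  let J : B →ₗ[k] (∀ t : S, U t) :=
    { toFun := fun u => fun t => ⟨g u t, hgmem u t⟩
      map_add' := fun u v => by
        funext t
        apply Subtype.ext
        show g (u + v) t = g u t + g v t
        have : T (u + v) = T u + T v := by
          apply LinearMap.ext; intro m
          simp only [hT, LinearMap.add_apply, mul_add]
        show E.symm (T (u + v)) t = E.symm (T u) t + E.symm (T v) t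
        rw [this, map_add]; rfl
      map_smul' := fun c u => by
        funext t
        apply Subtype.ext
        show g (c • u) t = c • g u t
        have : T (c • u) = c • T u := by
          apply LinearMap.ext; intro m
          simp only [hT, LinearMap.smul_apply, mul_smul_comm]
        show E.symm (T (c • u)) t = (c • E.symm (T u)) t
        rw [this, map_smul] }
  have hJinj : Function.Injective J := by
    intro u v huv
    have hguv : g u = g v := by
      funext t
      have := congrFun huv t
      exact congrArg Subtype.val this
    have hTuv : T u = T v := by
      have := congrArg E hguv
      simpa only [g, E.apply_symm_apply] using this
    have := congrArg (fun L => L (1 : B)) hTuv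
    simpa only [hT, map_one, one_mul] using this
  -- dimension count
  have hdim : Module.finrank k B ≤ ∑ t : S, Module.finrank k (U t) := by
    have h1 := LinearMap.finrank_le_finrank_of_injective hJinj
    rwa [Module.finrank_pi_fintype] at h1
  have hUle : ∀ t : S, Module.finrank k (U t) ≤ 1 := by
    intro t
    by_cases hbot : U t = ⊥
    · rw [hbot, finrank_bot]; exact Nat.zero_le 1
    · obtain ⟨u, humem, hu0⟩ := (Submodule.ne_bot_iff (U t)).mp hbot
      have huU : ∀ x, f x * u = u * act t x := humem
      have huunit := intertwiner_isUnit act f t hu0 huU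
      have hle : U t ≤ Submodule.span k {u} := by
        intro u' hu'
        obtain ⟨a, ha⟩ := intertwiner_scale act f t huunit.unit
          (by intro x; rw [IsUnit.unit_spec]; exact huU x)
          (by intro x; exact hu' x)
        rw [IsUnit.unit_spec] at ha
        exact (Submodule.mem_span_singleton).mpr ⟨a, ha.symm⟩
      calc Module.finrank k (U t) ≤ Module.finrank k (Submodule.span k {u}) :=
            Submodule.finrank_mono hle
      _ = 1 := finrank_span_singleton hu0
  -- conclude U 1 ≠ ⊥
  have hU1 : U 1 ≠ ⊥ := by
    intro hbot
    have hcard : Module.finrank k B = Fintype.card S := dim_eq_card act hG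
    have hsum : ∑ t : S, Module.finrank k (U t) ≤ Fintype.card S - 1 := by
      rw [← Finset.add_sum_erase Finset.univ _ (Finset.mem_univ (1 : S))]
      rw [hbot, finrank_bot, zero_add]
      calc ∑ t ∈ Finset.univ.erase (1 : S), Module.finrank k (U t)
          ≤ ∑ _t ∈ Finset.univ.erase (1 : S), 1 :=
            Finset.sum_le_sum (fun t _ => hUle t)
      _ = (Finset.univ.erase (1 : S)).card := by rw [Finset.sum_const, smul_eq_mul, mul_one]
      _ = Fintype.card S - 1 := by
            rw [Finset.card_erase_of_mem (Finset.mem_univ _), Finset.card_univ]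
    have hpos : 0 < Fintype.card S := Fintype.card_pos
    omega
  obtain ⟨u, humem, hu0⟩ := (Submodule.ne_bot_iff (U 1)).mp hU1
  have huU : ∀ x, f x * u = u * act 1 x := humem
  have huU' : ∀ x, f x * u = u * x := by
    intro x
    rw [huU x, map_one]
    rfl
  have huunit := intertwiner_isUnit act f 1 hu0 huU
  exact ⟨huunit.unit, by intro x; rw [IsUnit.unit_spec]; exact huU' x⟩

lemma smul_cancel_ne {a b : k} {v : B} (hv : v ≠ 0) (h : a • v = b • v) : a = b := by
  by_contra hne
  have h2 : (a - b) • v = 0 := by rw [sub_smul, h, sub_self]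
  have h3 : v = (a - b)⁻¹ • ((a - b) • v) := (inv_smul_smul₀ (sub_ne_zero.2 hne) v).symm
  rw [h2, smul_zero] at h3
  exact hv h3

end Aux

/-!
STATEMENT 15: Let `k` be an algebraically closed field of characteristic zero,
`S` a finite group, and `B` a Galois `S`-algebra over `k` that is simple as a
ring.  Then the group of `S`-equivariant `k`-algebra automorphisms of `B` is
isomorphic to the character group `Ŝ = Hom(S, kˣ)`.
-/
theorem stmt15 (k B S : Type*) [Field k] [IsAlgClosed k] [CharZero k]
    [Ring B] [Algebra k B] [FiniteDimensional k B] [Group S] [Fintype S]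
    (act : S →* (B ≃ₐ[k] B))
    (hGalois : Function.Bijective (galoisMap k act))
    (hsimple : IsSimpleRing B) :
    Nonempty ((equivariantAut k act) ≃* (S →* kˣ)) := by
  classical
  haveI : IsSimpleRing B := hsimple
  -- choose a conjugating unit for each equivariant automorphism
  have hconj : ∀ f : equivariantAut k act, ∃ u : Bˣ,
      ∀ x, (f : B ≃ₐ[k] B) x * (u : B) = (u : B) * x :=
    fun f => exists_conj_unit act hGalois (f : B ≃ₐ[k] B)
  choose uu huu using hconj
  -- `act s` of a conjugating unit of `f` is again a conjugating unit
  have hsu : ∀ (f : equivariantAut k act) (s : S) (x : B),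
      (f : B ≃ₐ[k] B) x * act s (uu f : B) = act s (uu f : B) * x := by
    intro f s x
    have hequiv : ∀ (t : S) (b : B), (f : B ≃ₐ[k] B) (act t b) = act t ((f : B ≃ₐ[k] B) b) :=
      f.2
    calc (f : B ≃ₐ[k] B) x * act s (uu f : B)
        = act s (act s⁻¹ ((f : B ≃ₐ[k] B) x)) * act s (uu f : B) := by
          rw [act_cancel]
    _ = act s (act s⁻¹ ((f : B ≃ₐ[k] B) x) * (uu f : B)) := by rw [map_mul]
    _ = act s ((f : B ≃ₐ[k] B) (act s⁻¹ x) * (uu f : B)) := by rw [← hequiv s⁻¹ x]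
    _ = act s ((uu f : B) * act s⁻¹ x) := by rw [huu f (act s⁻¹ x)]
    _ = act s (uu f : B) * act s (act s⁻¹ x) := by rw [map_mul]
    _ = act s (uu f : B) * x := by rw [act_cancel]
  -- hence `act s (uu f)` is a scalar multiple of `uu f`
  have hscal : ∀ (f : equivariantAut k act) (s : S), ∃ a : k,
      act s (uu f : B) = a • (uu f : B) := by
    intro f s
    exact intertwiner_scale act (f : B ≃ₐ[k] B) 1 (uu f)
      (by intro x; rw [map_one]; exact huu f x)
      (by intro x; rw [map_one]; exact hsu f s x)
  choose χv hχv using hscal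
  have hu_ne : ∀ f : equivariantAut k act, (uu f : B) ≠ 0 := fun f => Units.ne_zero (uu f)
  have hχv_ne : ∀ (f : equivariantAut k act) (s : S), χv f s ≠ 0 := by
    intro f s h0
    have := hχv f s
    rw [h0, zero_smul] at this
    have h1 : (act s (uu f : B)) ≠ 0 := by
      intro h
      apply hu_ne f
      have := congrArg (act s⁻¹) h
      rw [act_cancel', map_zero] at this
      exact this
    exact h1 this
  -- characterization: any conjugating element picks up the same character
  have hchar : ∀ (f : equivariantAut k act) (w : B), w ≠ 0 →
      (∀ x, (f : B ≃ₐ[k] B) x * w = w * x) → ∀ s : S,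
      act s w = χv f s • w := by
    intro f w hw0 hw s
    obtain ⟨a, ha⟩ := intertwiner_scale act (f : B ≃ₐ[k] B) 1 (uu f)
      (by intro x; rw [map_one]; exact huu f x)
      (u' := w) (by intro x; rw [map_one]; exact hw x)
    calc act s w = act s (a • (uu f : B)) := by rw [ha]
    _ = a • act s (uu f : B) := by rw [map_smul]
    _ = a • (χv f s • (uu f : B)) := by rw [hχv f s]
    _ = χv f s • (a • (uu f : B)) := by rw [smul_smul, smul_smul, mul_comm]
    _ = χv f s • w := by rw [← ha]
  -- the character associated to `f`
  have hχmul : ∀ (f : equivariantAut k act) (s t : S),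
      χv f (s * t) = χv f s * χv f t := by
    intro f s t
    apply smul_cancel_ne (hu_ne f)
    rw [← hχv f (s * t), ← act_act, hχv f t, map_smul, hχv f s, smul_smul, mul_comm (χv f t) (χv f s)]
  let χmh : equivariantAut k act → (S →* kˣ) := fun f =>
    MonoidHom.mk' (fun s => Units.mk0 (χv f s) (hχv_ne f s))
      (fun s t => Units.ext (by simp only [Units.val_mul, Units.val_mk0]; exact hχmul f s t))
  -- multiplicativity
  have hΦmul : ∀ f g : equivariantAut k act, χmh (f * g) = χmh f * χmh g := by
    intro f g
    apply MonoidHom.ext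
    intro s
    apply Units.ext
    show χv (f * g) s = χv f s * χv g s
    set w : B := (f : B ≃ₐ[k] B) (uu g : B) * (uu f : B) with hw_def
    have hwunit : IsUnit w := by
      refine IsUnit.mul ?_ (uu f).isUnit
      exact (uu g).isUnit.map (f : B ≃ₐ[k] B)
    have hw0 : w ≠ 0 := by
      intro h
      rw [h] at hwunit
      exact one_ne_zero (by
        obtain ⟨v, hv⟩ := hwunit
        have := v.mul_inv
        rw [hv] at this
        rw [zero_mul] at this
        exact this.symm)
    have hwconj : ∀ x, ((f * g : equivariantAut k act) : B ≃ₐ[k] B) x * w = w * x := by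
      intro x
      have hmul : ((f * g : equivariantAut k act) : B ≃ₐ[k] B) x
          = (f : B ≃ₐ[k] B) ((g : B ≃ₐ[k] B) x) := rfl
      calc ((f * g : equivariantAut k act) : B ≃ₐ[k] B) x * w
          = (f : B ≃ₐ[k] B) ((g : B ≃ₐ[k] B) x) * ((f : B ≃ₐ[k] B) (uu g : B) * (uu f : B)) := by
            rw [hmul, hw_def]
      _ = ((f : B ≃ₐ[k] B) ((g : B ≃ₐ[k] B) x) * (f : B ≃ₐ[k] B) (uu g : B)) * (uu f : B) := by
            rw [mul_assoc]
      _ = (f : B ≃ₐ[k] B) ((g : B ≃ₐ[k] B) x * (uu g : B)) * (uu f : B) := by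
            rw [map_mul]
      _ = (f : B ≃ₐ[k] B) ((uu g : B) * x) * (uu f : B) := by
            rw [huu g x]
      _ = ((f : B ≃ₐ[k] B) (uu g : B) * (f : B ≃ₐ[k] B) x) * (uu f : B) := by
            rw [map_mul]
      _ = (f : B ≃ₐ[k] B) (uu g : B) * ((f : B ≃ₐ[k] B) x * (uu f : B)) := by
            rw [mul_assoc]
      _ = (f : B ≃ₐ[k] B) (uu g : B) * ((uu f : B) * x) := by rw [huu f x]
      _ = w * x := by rw [hw_def, mul_assoc]
    have h1 : act s w = χv (f * g) s • w := hchar (f * g) w hw0 hwconj s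
    have h2 : act s w = (χv f s * χv g s) • w := by
      have hequiv : ∀ (t : S) (b : B),
          (f : B ≃ₐ[k] B) (act t b) = act t ((f : B ≃ₐ[k] B) b) := f.2
      calc act s w = act s ((f : B ≃ₐ[k] B) (uu g : B)) * act s (uu f : B) := by
            rw [hw_def, map_mul]
      _ = (f : B ≃ₐ[k] B) (act s (uu g : B)) * act s (uu f : B) := by rw [hequiv s]
      _ = (f : B ≃ₐ[k] B) (χv g s • (uu g : B)) * (χv f s • (uu f : B)) := by
            rw [hχv g s, hχv f s]
      _ = (χv g s • (f : B ≃ₐ[k] B) (uu g : B)) * (χv f s • (uu f : B)) := by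
            rw [map_smul]
      _ = (χv f s * χv g s) • w := by
            rw [hw_def, smul_mul_assoc, mul_smul_comm, smul_smul, mul_comm (χv g s)]
    exact smul_cancel_ne hw0 (h1.symm.trans h2)
  let Φ : equivariantAut k act →* (S →* kˣ) := MonoidHom.mk' χmh hΦmul
  -- injectivity
  have hinj : Function.Injective Φ := by
    rw [injective_iff_map_eq_one]
    intro f hf
    have hfs : ∀ s : S, χv f s = 1 := by
      intro s
      have h2 := congrArg (fun ψ : S →* kˣ => ((ψ s : kˣ) : k)) hf
      simp only [MonoidHom.one_apply, Units.val_one] at h2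
      exact h2
    have hfix : ∀ s : S, act s (uu f : B) = (uu f : B) := by
      intro s
      rw [hχv f s, hfs s, one_smul]
    obtain ⟨a, ha⟩ := fixed_is_scalar act hGalois hfix
    have ha0 : a ≠ 0 := by
      intro h0
      apply hu_ne f
      rw [ha, h0, map_zero]
    have hfx : ∀ x : B, (f : B ≃ₐ[k] B) x = x := by
      intro x
      have h1 := huu f x
      rw [ha, Algebra.algebraMap_eq_smul_one] at h1
      rw [mul_smul_comm, mul_one, smul_mul_assoc, one_mul] at h1
      calc (f : B ≃ₐ[k] B) x = a⁻¹ • (a • (f : B ≃ₐ[k] B) x) := (inv_smul_smul₀ ha0 _).symm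
      _ = a⁻¹ • (a • x) := by rw [h1]
      _ = x := inv_smul_smul₀ ha0 x
    apply Subtype.ext
    apply AlgEquiv.ext
    intro x
    exact hfx x
  -- surjectivity
  have hsurj : Function.Surjective Φ := by
    intro χ
    -- construct an eigenvector for χ
    let g₀ : S → B := fun s => (((χ s)⁻¹ : kˣ) : k) • (1 : B)
    have hg₀ : ∀ m, galoisMap k act g₀ m = ∑ s : S, (((χ s)⁻¹ : kˣ) : k) • act s m := by
      intro m
      rw [galoisMap_apply]
      apply Finset.sum_congr rfl
      intro s _
      rw [smul_mul_assoc, one_mul]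
    have hne : galoisMap k act g₀ ≠ 0 := by
      intro h
      have : g₀ = 0 := by
        apply hGalois.injective
        rw [h, galoisMap_zero]
      have h1 := congrFun this 1
      simp only [g₀, Pi.zero_apply] at h1
      have h2 := congrArg (fun x : B => ((χ (1 : S) : kˣ) : k) • x) h1
      simp only [smul_smul, smul_zero, ← Units.val_mul, mul_inv_cancel, Units.val_one,
        one_smul] at h2
      exact one_ne_zero h2
    have hm : ∃ m, galoisMap k act g₀ m ≠ 0 := by
      by_contra h
      push_neg at h
      exact hne (LinearMap.ext h)
    obtain ⟨m, hm0⟩ := hm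
    set u₀ : B := galoisMap k act g₀ m with hu₀_def
    have heig : ∀ t : S, act t u₀ = ((χ t : kˣ) : k) • u₀ := by
      intro t
      have hcoef : ∀ s : S, ((χ s)⁻¹ : kˣ) = (χ t) * ((χ (t * s))⁻¹ : kˣ) := by
        intro s
        rw [map_mul, mul_inv_rev, mul_comm ((χ s)⁻¹) ((χ t)⁻¹), mul_inv_cancel_left]
      calc act t u₀ = ∑ s : S, (((χ s)⁻¹ : kˣ) : k) • act (t * s) m := by
            rw [hu₀_def, hg₀, map_sum]
            refine Finset.sum_congr rfl fun s _ => ?_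
            rw [map_smul, act_act]
      _ = ∑ s : S, ((χ t : kˣ) : k) • (((χ s)⁻¹ : kˣ) : k) • act s m := by
            rw [← Equiv.sum_comp (Equiv.mulLeft t)
              (fun r : S => ((χ t : kˣ) : k) • (((χ r)⁻¹ : kˣ) : k) • act r m)]
            refine Finset.sum_congr rfl fun s _ => ?_
            simp only [Equiv.coe_mulLeft]
            rw [smul_smul, ← Units.val_mul, ← hcoef s]
      _ = ((χ t : kˣ) : k) • u₀ := by rw [← Finset.smul_sum, hu₀_def, hg₀]
    -- u₀ is a unit
    have huunit : IsUnit u₀ := by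
      have hex : ∃ b : B, b * u₀ = 1 := by
        obtain ⟨T, hT⟩ := exists_endo_map (k := k) u₀ hm0 1
        obtain ⟨g, hgT⟩ := galoisMap_surj act hGalois T
        refine ⟨∑ s : S, ((χ s : kˣ) : k) • g s, ?_⟩
        rw [Finset.sum_mul]
        rw [← hT, ← hgT u₀]
        apply Finset.sum_congr rfl
        intro s _
        rw [heig s, smul_mul_assoc, mul_smul_comm]
      obtain ⟨b, hb⟩ := hex
      exact isUnit_of_mul_eq_one'' k u₀ b hb
    set u₁ : Bˣ := huunit.unit with hu₁_def
    have hu₁_val : (u₁ : B) = u₀ := huunit.unit_spec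
    have heig₁ : ∀ t : S, act t (u₁ : B) = ((χ t : kˣ) : k) • (u₁ : B) := by
      intro t; rw [hu₁_val]; exact heig t
    have heig_inv : ∀ t : S, act t ((↑u₁⁻¹ : B)) = (((χ t)⁻¹ : kˣ) : k) • (↑u₁⁻¹ : B) := by
      intro t
      have h1 : act t ((u₁ : B) * (↑u₁⁻¹ : B)) = 1 := by rw [Units.mul_inv, map_one]
      rw [map_mul, heig₁ t] at h1
      calc act t ((↑u₁⁻¹ : B))
          = ((((χ t)⁻¹ : kˣ) : k) • ((↑u₁⁻¹ : B) * (((χ t : kˣ) : k) • (u₁ : B)))) * act t (↑u₁⁻¹ : B) := by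
            rw [mul_smul_comm, Units.inv_mul, smul_smul]
            simp only [Units.val_inv_eq_inv_val]
            rw [inv_mul_cancel₀ (Units.ne_zero (χ t)), one_smul, one_mul]
      _ = (((χ t)⁻¹ : kˣ) : k) • ((↑u₁⁻¹ : B) * ((((χ t : kˣ) : k) • (u₁ : B)) * act t (↑u₁⁻¹ : B))) := by
            rw [smul_mul_assoc, mul_assoc]
      _ = (((χ t)⁻¹ : kˣ) : k) • (↑u₁⁻¹ : B) := by rw [h1, mul_one]
    -- the conjugation automorphism
    let f₀ : B ≃ₐ[k] B :=
      { toFun := fun x => (u₁ : B) * x * (↑u₁⁻¹ : B)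
        invFun := fun x => (↑u₁⁻¹ : B) * x * (u₁ : B)
        left_inv := fun x => by
          simp only [mul_assoc, Units.inv_mul, Units.mul_inv, mul_one,
            Units.inv_mul_cancel_left, Units.mul_inv_cancel_left]
        right_inv := fun x => by
          simp only [mul_assoc, Units.inv_mul, Units.mul_inv, mul_one,
            Units.inv_mul_cancel_left, Units.mul_inv_cancel_left]
        map_mul' := fun x y => by
          simp only [mul_assoc, Units.inv_mul_cancel_left]
        map_add' := fun x y => by
          simp only [mul_add, add_mul]
        commutes' := fun r => by
          show (u₁ : B) * algebraMap k B r * (↑u₁⁻¹ : B) = algebraMap k B r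
          calc (u₁ : B) * algebraMap k B r * (↑u₁⁻¹ : B)
              = algebraMap k B r * (u₁ : B) * (↑u₁⁻¹ : B) := by
                rw [← Algebra.commutes r ((u₁ : B))]
          _ = algebraMap k B r * ((u₁ : B) * (↑u₁⁻¹ : B)) := by rw [mul_assoc]
          _ = algebraMap k B r := by rw [Units.mul_inv, mul_one] }
    have hf₀_apply : ∀ x, f₀ x = (u₁ : B) * x * (↑u₁⁻¹ : B) := fun x => rfl
    have hf₀mem : f₀ ∈ equivariantAut k act := by
      intro s b
      rw [hf₀_apply, hf₀_apply, map_mul, map_mul, heig₁ s, heig_inv s]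
      rw [smul_mul_assoc, smul_mul_assoc, mul_smul_comm, smul_smul]
      simp only [Units.val_inv_eq_inv_val]
      rw [mul_inv_cancel₀ (Units.ne_zero (χ s)), one_smul]
    refine ⟨⟨f₀, hf₀mem⟩, ?_⟩
    apply MonoidHom.ext
    intro s
    apply Units.ext
    show χv ⟨f₀, hf₀mem⟩ s = ((χ s : kˣ) : k)
    have hconj₀ : ∀ x, f₀ x * u₀ = u₀ * x := by
      intro x
      rw [hf₀_apply, ← hu₁_val, mul_assoc, Units.inv_mul, mul_one]
    have h1 := hchar ⟨f₀, hf₀mem⟩ u₀ hm0 hconj₀ s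
    have h2 := heig s
    exact smul_cancel_ne hm0 (h1.symm.trans h2)
  exact ⟨MulEquiv.ofBijective Φ ⟨hinj, hsurj⟩⟩
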